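/- Let α, β ∈ (0,1), let g(z) = ((β + (1−β)z)/(α + (1−α)z))², and set A = [α(1−α) + (1−β)²]², C = [α² + β(1−β)]², B = 4αβ(1−α)(1−β) + 2β(1−β)³ + α²(1−β)² + 2α³(1−α) − (1−α)²β², and D = B² − 4AC. If D > 0 and B < 0, then the quadratic equation Az² + Bz + C = 0 has two distinct positive real roots z₁ ≠ z₂, and each root z_i satisfies g(g(z_i)) = z_i. -/

import Mathlib

lemma divdiv (x y c : ℝ) (hc : c ≠ 0) : x / c / (y / c) = x / y := by
  rw [div_div_div_cancel_right₀]
  exact hc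

/-- Key lemma: any positive root of the quadratic is a 2-periodic point of `g`. -/
lemma key12 (α β : ℝ)
    (hα : α ∈ Set.Ioo (0 : ℝ) 1) (hβ : β ∈ Set.Ioo (0 : ℝ) 1)
    (g : ℝ → ℝ) (hg : ∀ z : ℝ, g z = ((β + (1 - β) * z) / (α + (1 - α) * z)) ^ 2)
    (z : ℝ) (hz : 0 < z)
    (hq : (α * (1 - α) + (1 - β) ^ 2) ^ 2 * z ^ 2 +
      (4 * α * β * (1 - α) * (1 - β) + 2 * β * (1 - β) ^ 3 + α ^ 2 * (1 - β) ^ 2 +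
        2 * α ^ 3 * (1 - α) - (1 - α) ^ 2 * β ^ 2) * z + (α ^ 2 + β * (1 - β)) ^ 2 = 0) :
    g (g z) = z := by
  obtain ⟨ha0, ha1⟩ := hα
  obtain ⟨hb0, hb1⟩ := hβ
  have hM : 0 < α + (1 - α) * z := by nlinarith
  have hT : 0 < α * (α + (1 - α) * z) ^ 2 + (1 - α) * (β + (1 - β) * z) ^ 2 := by
    nlinarith [mul_pos ha0 (pow_pos hM 2), sq_nonneg (β + (1 - β) * z)]
  rw [hg, hg]
  have h1 : α + (1 - α) * ((β + (1 - β) * z) / (α + (1 - α) * z)) ^ 2 =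
      (α * (α + (1 - α) * z) ^ 2 + (1 - α) * (β + (1 - β) * z) ^ 2) / (α + (1 - α) * z) ^ 2 := by
    field_simp
  have h2 : β + (1 - β) * ((β + (1 - β) * z) / (α + (1 - α) * z)) ^ 2 =
      (β * (α + (1 - α) * z) ^ 2 + (1 - β) * (β + (1 - β) * z) ^ 2) / (α + (1 - α) * z) ^ 2 := by
    field_simp
  rw [h1, h2, divdiv _ _ _ (by positivity), div_pow, div_eq_iff (by positivity)]
  linear_combination (-(z * (α + (1 - α) * z) ^ 2 - (β + (1 - β) * z) ^ 2)) * hq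

theorem stmt12 (α β : ℝ)
    (hα : α ∈ Set.Ioo (0 : ℝ) 1) (hβ : β ∈ Set.Ioo (0 : ℝ) 1)
    (g : ℝ → ℝ) (hg : ∀ z : ℝ, g z = ((β + (1 - β) * z) / (α + (1 - α) * z)) ^ 2)
    (A B C D : ℝ)
    (hA : A = (α * (1 - α) + (1 - β) ^ 2) ^ 2)
    (hC : C = (α ^ 2 + β * (1 - β)) ^ 2)
    (hB : B = 4 * α * β * (1 - α) * (1 - β) + 2 * β * (1 - β) ^ 3 + α ^ 2 * (1 - β) ^ 2 +
      2 * α ^ 3 * (1 - α) - (1 - α) ^ 2 * β ^ 2)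
    (hD : D = B ^ 2 - 4 * A * C)
    (hDpos : 0 < D) (hBneg : B < 0) :
    ∃ z₁ z₂ : ℝ, z₁ ≠ z₂ ∧ 0 < z₁ ∧ 0 < z₂ ∧
      A * z₁ ^ 2 + B * z₁ + C = 0 ∧ A * z₂ ^ 2 + B * z₂ + C = 0 ∧
      g (g z₁) = z₁ ∧ g (g z₂) = z₂ := by
  obtain ⟨ha0, ha1⟩ := hα
  obtain ⟨hb0, hb1⟩ := hβ
  have hApos : 0 < A := by
    have h : 0 < α * (1 - α) + (1 - β) ^ 2 := by nlinarith
    rw [hA]; positivity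
  have hCpos : 0 < C := by
    have h : 0 < α ^ 2 + β * (1 - β) := by nlinarith
    rw [hC]; positivity
  set s := Real.sqrt D with hs
  have hspos : 0 < s := Real.sqrt_pos.mpr hDpos
  have hs2 : s ^ 2 = D := Real.sq_sqrt hDpos.le
  have hsltB : s < -B := by nlinarith [mul_pos hApos hCpos]
  have h2A : (0:ℝ) < 2 * A := by linarith
  have quad : ∀ z : ℝ, A * z ^ 2 + B * z + C = 0 →
      (α * (1 - α) + (1 - β) ^ 2) ^ 2 * z ^ 2 +
      (4 * α * β * (1 - α) * (1 - β) + 2 * β * (1 - β) ^ 3 + α ^ 2 * (1 - β) ^ 2 +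
        2 * α ^ 3 * (1 - α) - (1 - α) ^ 2 * β ^ 2) * z + (α ^ 2 + β * (1 - β)) ^ 2 = 0 := by
    intro z h
    rw [← hA, ← hB, ← hC]
    exact h
  have root1 : A * ((-B + s) / (2 * A)) ^ 2 + B * ((-B + s) / (2 * A)) + C = 0 := by
    field_simp
    linear_combination hs2 + hD
  have root2 : A * ((-B - s) / (2 * A)) ^ 2 + B * ((-B - s) / (2 * A)) + C = 0 := by
    field_simp
    linear_combination hs2 + hD
  have hp1 : 0 < (-B + s) / (2 * A) := div_pos (by linarith) h2A
  have hp2 : 0 < (-B - s) / (2 * A) := div_pos (by linarith) h2A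
  refine ⟨(-B + s) / (2 * A), (-B - s) / (2 * A), ?_, hp1, hp2, root1, root2, ?_, ?_⟩
  · have : (-B - s) / (2 * A) < (-B + s) / (2 * A) :=
      (div_lt_div_iff_of_pos_right h2A).mpr (by linarith)
    exact ne_of_gt this
  · exact key12 α β ⟨ha0, ha1⟩ ⟨hb0, hb1⟩ g hg _ hp1 (quad _ root1)
  · exact key12 α β ⟨ha0, ha1⟩ ⟨hb0, hb1⟩ g hg _ hp2 (quad _ root2)
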